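/- Let E be an analytic equivalence relation on 2^ℕ extending E₀ (E₀ ⊆ E). If E has no comeager equivalence class, then E₀ is Borel reducible to E. -/

import Mathlib

open MeasureTheory

/-- Eventual equality on Cantor space `2^ℕ`. -/
def E0 (x y : ℕ → Bool) : Prop := ∃ N, ∀ n ≥ N, x n = y n


open MeasureTheory TopologicalSpace Set Filter Topology

namespace E0Red


variable {Y : Type*} [TopologicalSpace Y]

lemma isMeagre_sUnion {S : Set (Set Y)} (hc : S.Countable) (h : ∀ s ∈ S, IsMeagre s) :
    IsMeagre (⋃₀ S) := by
  rw [IsMeagre, Set.compl_sUnion]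
  exact (countable_sInter_mem (hc.image _)).mpr (by
    rintro t ⟨s, hs, rfl⟩
    exact h s hs)

lemma isMeagre_iUnion' {ι : Sort*} [Countable ι] (f : ι → Set Y) (h : ∀ i, IsMeagre (f i)) :
    IsMeagre (⋃ i, f i) := by
  rw [← Set.sUnion_range]
  refine isMeagre_sUnion (Set.countable_range f) ?_
  rintro t ⟨i, rfl⟩
  exact h i

variable [SecondCountableTopology Y] [BaireSpace Y]

/-- The complement of the union of basic open sets meeting `B` in a meager set. -/
def kern (B : Set Y) : Set Y := (⋃₀ {V ∈ countableBasis Y | IsMeagre (V ∩ B)})ᶜ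

/-- A Baire-measurable hull of `B`. -/
def hull (B : Set Y) : Set Y := kern B ∪ B

lemma subset_hull {B : Set Y} : B ⊆ hull B := subset_union_right

lemma hull_mono {B C : Set Y} (h : B ⊆ C) : hull B ⊆ hull C := by
  apply Set.union_subset_union _ h
  apply compl_subset_compl.mpr
  apply Set.sUnion_subset_sUnion
  rintro V ⟨hV, hm⟩
  exact ⟨hV, hm.mono (Set.inter_subset_inter_right _ h)⟩

lemma isMeagre_diff_kern (B : Set Y) : IsMeagre (B \ kern B) := by
  have : B \ kern B ⊆ ⋃₀ {s | ∃ V ∈ countableBasis Y, IsMeagre (V ∩ B) ∧ s = V ∩ B} := by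
    rintro x ⟨hxB, hx⟩
    simp only [kern, Set.mem_compl_iff, not_not] at hx
    rcases hx with ⟨V, ⟨hV, hm⟩, hxV⟩
    exact ⟨V ∩ B, ⟨V, hV, hm, rfl⟩, hxV, hxB⟩
  refine (isMeagre_sUnion ?_ ?_).mono this
  · apply Set.Countable.mono _ (((countable_countableBasis Y).image (· ∩ B)))
    rintro s ⟨V, hV, _, rfl⟩
    exact ⟨V, hV, rfl⟩
  · rintro s ⟨V, _, hm, rfl⟩
    exact hm

lemma baireMeasurableSet_hull (B : Set Y) : BaireMeasurableSet (hull B) := by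
  have hk : BaireMeasurableSet (kern B) := by
    apply BaireMeasurableSet.of_compl
    rw [kern, compl_compl]
    refine (isOpen_sUnion (fun (V : Set Y) hV => ?_)).baireMeasurableSet
    exact (isBasis_countableBasis Y).isOpen hV.1
  have : hull B = kern B ∪ (B \ kern B) := by
    simp [hull, Set.union_diff_self]
  rw [this]
  exact hk.union (isMeagre_diff_kern B).baireMeasurableSet

/-- key hull property: a Baire measurable subset of `hull B \ B` is meager. -/
lemma isMeagre_of_subset_hull_diff {B C : Set Y} (hC : BaireMeasurableSet C)
    (h : C ⊆ hull B \ B) : IsMeagre C := by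
  by_contra hnm
  obtain ⟨W, hWo, hWe⟩ := hC.residualEq_isOpen
  rw [Filter.eventuallyEq_set] at hWe
  have hWC : IsMeagre (W \ C) := by
    rw [IsMeagre]
    refine Filter.mem_of_superset hWe ?_
    intro x hx
    simp only [Set.mem_setOf_eq] at hx
    simp only [Set.mem_compl_iff, Set.mem_diff, not_and, not_not]
    intro h'
    exact hx.mpr h'
  have hCW : IsMeagre (C \ W) := by
    rw [IsMeagre]
    refine Filter.mem_of_superset hWe ?_
    intro x hx
    simp only [Set.mem_setOf_eq] at hx
    simp only [Set.mem_compl_iff, Set.mem_diff, not_and, not_not]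
    intro h'
    exact hx.mp h' 
  have hWne : W.Nonempty := by
    rcases Set.eq_empty_or_nonempty W with rfl | hne
    · refine absurd ?_ hnm
      have : C \ (∅ : Set Y) = C := by simp
      rw [← this]
      exact hCW
    · exact hne
  obtain ⟨x, hxW⟩ := hWne
  obtain ⟨V, hVb, hxV, hVW⟩ := (isBasis_countableBasis Y).exists_subset_of_mem_open hxW hWo
  -- V ∩ B is meager since C ∩ B = ∅ and C is comeager in V
  have hVB : IsMeagre (V ∩ B) := by
    apply hWC.mono
    intro z ⟨hzV, hzB⟩
    refine ⟨hVW hzV, fun hzC => ?_⟩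
    exact (h hzC).2 hzB
  -- so V ⊆ (kern B)ᶜ
  have hVk : V ⊆ (kern B)ᶜ := fun z hz => by
    simp only [kern, Set.mem_compl_iff, not_not]
    exact ⟨V, ⟨hVb, hVB⟩, hz⟩
  -- C ⊆ kern B since C ⊆ hull B and C ∩ B = ∅
  have hCk : C ⊆ kern B := fun z hz => by
    rcases (h hz).1 with h1 | h1
    · exact h1
    · exact absurd h1 (h hz).2
  -- hence V ∩ C = ∅, so V ⊆ W \ C is meager; but V nonempty open
  have hVm : IsMeagre V := by
    apply hWC.mono
    intro z hz
    exact ⟨hVW hz, fun hzC => hVk hz (hCk hzC)⟩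
  have : Dense Vᶜ := dense_of_mem_residual hVm
  rcases this.inter_open_nonempty V ((isBasis_countableBasis Y).isOpen hVb) ⟨x, hxV⟩ with ⟨z, hz1, hz2⟩
  exact hz2 hz1

/-- Nikodym: the Suslin operation applied to a monotone open scheme yields
a Baire measurable set. -/
theorem baireMeasurableSet_suslin (B : List ℕ → Set Y) (hBo : ∀ s, IsOpen (B s))
    (hmono : ∀ s k, B (s ++ [k]) ⊆ B s) :
    BaireMeasurableSet (⋃ y : ℕ → ℕ, ⋂ n, B (List.map y (List.range n))) := by
  classical
  set A : List ℕ → Set Y := fun s => ⋃ y : ℕ → ℕ, ⋂ n, B (s ++ List.map y (List.range n)) with hA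
  have hAsub : ∀ s, A s ⊆ B s := by
    intro s x hx
    rcases Set.mem_iUnion.1 hx with ⟨y, hy⟩
    have := Set.mem_iInter.1 hy 0
    simpa using this
  have hcons : ∀ (s : List ℕ) (k : ℕ) (y : ℕ → ℕ) (n : ℕ),
      (s ++ [k]) ++ List.map y (List.range n) = s ++ List.map (fun i => Nat.rec k (fun m _ => y m) i) (List.range (n+1)) := by
    intro s k y n
    rw [List.range_succ_eq_map, List.map_cons, List.map_map]
    simp [List.append_assoc]
  have hsplit : ∀ s, A s = ⋃ k, A (s ++ [k]) := by
    intro s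
    apply Set.Subset.antisymm
    · intro x hx
      rcases Set.mem_iUnion.1 hx with ⟨y, hy⟩
      refine Set.mem_iUnion.2 ⟨y 0, Set.mem_iUnion.2 ⟨fun n => y (n+1), Set.mem_iInter.2 fun n => ?_⟩⟩
      have := Set.mem_iInter.1 hy (n+1)
      rw [List.range_succ_eq_map, List.map_cons, List.map_map] at this
      simpa [List.append_assoc, Function.comp_def] using this
    · intro x hx
      rcases Set.mem_iUnion.1 hx with ⟨k, hk⟩
      rcases Set.mem_iUnion.1 hk with ⟨y, hy⟩
      refine Set.mem_iUnion.2 ⟨fun i => Nat.rec k (fun m _ => y m) i, Set.mem_iInter.2 fun n => ?_⟩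
      cases n with
      | zero => simpa using hmono s k (hAsub _ (Set.mem_iUnion.2 ⟨y, hy⟩))
      | succ n =>
        have := Set.mem_iInter.1 hy n
        rw [← hcons]
        exact (List.append_assoc s [k] (List.map y (List.range n))) ▸ this
  -- the Baire measurable approximations
  set G : List ℕ → Set Y := fun s => hull (A s) ∩ B s with hG
  have hGbm : ∀ s, BaireMeasurableSet (G s) :=
    fun s => (baireMeasurableSet_hull _).inter (hBo s).baireMeasurableSet
  have hAG : ∀ s, A s ⊆ G s := fun s => Set.subset_inter subset_hull (hAsub s)
  have hGmono : ∀ s k, G (s ++ [k]) ⊆ G s := by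
    intro s k
    apply Set.subset_inter
    · exact (Set.inter_subset_left).trans (hull_mono (by rw [hsplit s]; exact Set.subset_iUnion (fun k => A (s ++ [k])) k))
    · exact (Set.inter_subset_right).trans (hmono s k)
  set M : List ℕ → Set Y := fun s => G s \ ⋃ k, G (s ++ [k]) with hM
  have hMm : ∀ s, IsMeagre (M s) := by
    intro s
    apply isMeagre_of_subset_hull_diff (B := A s)
    · exact (hGbm s).diff (BaireMeasurableSet.iUnion fun k => hGbm _)
    · intro x hx
      constructor
      · exact hx.1.1
      · intro hxA
        rw [hsplit s] at hxA
        rcases Set.mem_iUnion.1 hxA with ⟨k, hk⟩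
        exact hx.2 (Set.mem_iUnion.2 ⟨k, hAG _ hk⟩)
  have hMall : IsMeagre (⋃ s : List ℕ, M s) := by
    have := isMeagre_sUnion (S := Set.range M) (Set.countable_range M) (by rintro t ⟨s, rfl⟩; exact hMm s)
    rwa [Set.sUnion_range] at this
  -- main inclusion
  have hmain : G [] \ (⋃ s : List ℕ, M s) ⊆ A [] := by
    intro x hx
    have hstep : ∀ s, x ∈ G s → ∃ k, x ∈ G (s ++ [k]) := by
      intro s hs
      by_contra hc
      push_neg at hc
      have hxM : x ∈ ⋃ s : List ℕ, M s := by
        refine Set.mem_iUnion.2 ⟨s, hs, ?_⟩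
        intro h
        rcases Set.mem_iUnion.1 h with ⟨k, hk⟩
        exact hc k hk
      exact hx.2 hxM
    -- build the branch by recursion
    let T : ℕ → {s : List ℕ // x ∈ G s} := fun n =>
      Nat.rec ⟨[], hx.1⟩ (fun _ p => ⟨p.1 ++ [Classical.choose (hstep p.1 p.2)],
        Classical.choose_spec (hstep p.1 p.2)⟩) n
    have hTsucc : ∀ n, (T (n+1)).1 = (T n).1 ++ [Classical.choose (hstep (T n).1 (T n).2)] := fun n => rfl
    set y : ℕ → ℕ := fun n => Classical.choose (hstep (T n).1 (T n).2) with hy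
    have hT : ∀ n, (T n).1 = List.map y (List.range n) := by
      intro n
      induction n with
      | zero => rfl
      | succ n ih =>
        rw [List.range_succ, List.map_append, ← ih, hTsucc n]
        rfl
    refine Set.mem_iUnion.2 ⟨y, Set.mem_iInter.2 fun n => ?_⟩
    have h2 := (T n).2
    rw [hT n] at h2
    exact h2.2
  -- conclude
  have hfin : A [] = ⋃ y : ℕ → ℕ, ⋂ n, B (List.map y (List.range n)) := by
    simp [hA]
  rw [← hfin]
  apply BaireMeasurableSet.congr ((hGbm []).diff hMall.baireMeasurableSet)
  rw [Filter.eventuallyEq_set]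
  have hsub2 : A [] ⊆ G [] := hAG []
  apply Filter.mem_of_superset hMall
  intro z hz
  simp only [Set.mem_compl_iff] at hz
  simp only [Set.mem_diff, Set.mem_setOf_eq]
  constructor
  · rintro ⟨h1, _⟩
    exact hmain ⟨h1, hz⟩
  · intro hA2
    exact ⟨hsub2 hA2, hz⟩


lemma getD_map_range {y : ℕ → ℕ} {n i : ℕ} (h : i < n) :
    (List.map y (List.range n)).getD i 0 = y i := by
  rw [List.getD_eq_getElem?_getD]
  simp [List.getElem?_map, List.getElem?_range, h]

variable {Y : Type*} [TopologicalSpace Y]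

theorem AnalyticSet.baireMeasurableSet' [T2Space Y] [SecondCountableTopology Y]
    [MetrizableSpace Y] [BaireSpace Y] {A : Set Y} (hA : AnalyticSet A) :
    BaireMeasurableSet A := by
  classical
  letI : MetricSpace Y := TopologicalSpace.metrizableSpaceMetric Y
  rw [AnalyticSet] at hA
  rcases hA with rfl | ⟨g, hg, rfl⟩
  · exact isOpen_empty.baireMeasurableSet
  set B : List ℕ → Set Y := fun s =>
    ⋃ z ∈ {z : ℕ → ℕ | ∀ i < s.length, z i = s.getD i 0}, Metric.ball (g z) (1 / (s.length + 1)) with hB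
  have hBo : ∀ s, IsOpen (B s) := fun s => isOpen_biUnion fun _ _ => Metric.isOpen_ball
  have hmono : ∀ s k, B (s ++ [k]) ⊆ B s := by
    intro s k x hx
    rcases Set.mem_iUnion₂.1 hx with ⟨z, hz, hxz⟩
    refine Set.mem_iUnion₂.2 ⟨z, ?_, ?_⟩
    · intro i hi
      have := hz i (by simp; omega)
      rwa [List.getD_append _ _ _ _ hi] at this
    · refine Metric.ball_subset_ball ?_ hxz
      have : (s.length : ℝ) + 1 ≤ (s ++ [k]).length + 1 := by
        simp
      apply one_div_le_one_div_of_le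
      · positivity
      · simpa using this
  have key : Set.range g = ⋃ y : ℕ → ℕ, ⋂ n, B (List.map y (List.range n)) := by
    apply Set.Subset.antisymm
    · rintro x ⟨y, rfl⟩
      refine Set.mem_iUnion.2 ⟨y, Set.mem_iInter.2 fun n => ?_⟩
      refine Set.mem_iUnion₂.2 ⟨y, ?_, ?_⟩
      · intro i hi
        rw [getD_map_range (by simpa using hi)]
      · simp only [Metric.mem_ball, dist_self]
        positivity
    · intro x hx
      rcases Set.mem_iUnion.1 hx with ⟨y, hy⟩
      have hz : ∀ n, ∃ z : ℕ → ℕ, (∀ i < n, z i = y i) ∧ dist x (g z) < 1 / (n + 1) := by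
        intro n
        have := Set.mem_iInter.1 hy n
        rcases Set.mem_iUnion₂.1 this with ⟨z, hz1, hz2⟩
        refine ⟨z, fun i hi => ?_, ?_⟩
        · have := hz1 i (by simpa using hi)
          rwa [getD_map_range (by simpa using hi)] at this
        · rw [Metric.mem_ball] at hz2
          simpa using hz2
      choose z hz1 hz2 using hz
      have hzy : Filter.Tendsto z Filter.atTop (nhds y) := by
        rw [tendsto_pi_nhds]
        intro i
        apply Filter.Tendsto.congr' (f₁ := fun _ => y i) _ tendsto_const_nhds
        filter_upwards [Filter.eventually_ge_atTop (i+1)] with n hn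
        exact (hz1 n i (by omega)).symm
      have hgz : Filter.Tendsto (fun n => g (z n)) Filter.atTop (nhds (g y)) :=
        (hg.tendsto y).comp hzy
      have hgx : Filter.Tendsto (fun n => g (z n)) Filter.atTop (nhds x) := by
        rw [tendsto_iff_dist_tendsto_zero]
        apply squeeze_zero (fun n => dist_nonneg) (fun n => (dist_comm (g (z n)) x ▸ (hz2 n).le))
        have : Filter.Tendsto (fun n : ℕ => 1 / ((n : ℝ) + 1)) Filter.atTop (nhds 0) :=
          tendsto_one_div_add_atTop_nhds_zero_nat
        exact this
      have : x = g y := tendsto_nhds_unique hgx hgz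
      exact this ▸ Set.mem_range_self y
  rw [key]
  exact baireMeasurableSet_suslin B hBo hmono


lemma getD_map_range'' {α : Type*} (y : ℕ → α) (d : α) {n i : ℕ} (h : i < n) :
    (List.map y (List.range n)).getD i d = y i := by
  rw [List.getD_eq_getElem?_getD]
  simp [List.getElem?_map, List.getElem?_range, h]

/-- Cylinder set in Cantor space. -/
def cyl (u : List Bool) : Set (ℕ → Bool) := {x | ∀ i < u.length, x i = u.getD i false}

/-- Initial segment of a point, as a list. -/
def seg (x : ℕ → Bool) (n : ℕ) : List Bool := List.map x (List.range n)

@[simp] lemma length_seg (x : ℕ → Bool) (n : ℕ) : (seg x n).length = n := by simp [seg]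

lemma getD_seg (x : ℕ → Bool) {n i : ℕ} (h : i < n) : (seg x n).getD i false = x i :=
  getD_map_range'' x false h

lemma mem_cyl_seg (x : ℕ → Bool) (n : ℕ) : x ∈ cyl (seg x n) := by
  intro i hi
  rw [getD_seg x (by simpa using hi)]

lemma mem_cyl_seg_iff {x y : ℕ → Bool} {n : ℕ} : y ∈ cyl (seg x n) ↔ ∀ i < n, y i = x i := by
  constructor
  · intro h i hi
    have := h i (by simpa using hi)
    rwa [getD_seg x hi] at this
  · intro h i hi
    rw [getD_seg x (by simpa using hi)]
    exact h i (by simpa using hi)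

lemma cyl_anti {u w : List Bool} (h : u <+: w) : cyl w ⊆ cyl u := by
  rcases h with ⟨t, rfl⟩
  intro x hx i hi
  have h2 := hx i (by simp; omega)
  rwa [List.getD_append _ _ _ _ hi] at h2

lemma prefix_seg {x : ℕ → Bool} {u : List Bool} (h : x ∈ cyl u) {m : ℕ} (hm : u.length ≤ m) :
    u <+: seg x m := by
  have : u = (seg x m).take u.length := by
    apply List.ext_getElem
    · simp [seg]; omega
    · intro i h1 h2
      have h3' : i < (seg x m).length := by simp; omega
      rw [List.getElem_take]
      have h3 : i < m := by omega
      rw [show (seg x m)[i] = (seg x m).getD i false from (List.getD_eq_getElem _ _ _).symm,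
        getD_seg x h3]
      have := h i h1
      rw [this, List.getD_eq_getElem _ _ h1]
  rw [this]
  exact List.take_prefix _ _

lemma isOpen_cyl (u : List Bool) : IsOpen (cyl u) := by
  have : cyl u = ⋂ i ∈ Set.Iio u.length, {x : ℕ → Bool | x i = u.getD i false} := by
    ext x; simp [cyl]
  rw [this]
  refine (Set.finite_Iio _).isOpen_biInter fun i _ => ?_
  have : {x : ℕ → Bool | x i = u.getD i false} = (fun x : ℕ → Bool => x i) ⁻¹' {u.getD i false} := rfl
  rw [this]
  exact (continuous_apply i).isOpen_preimage _ (isOpen_discrete _)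

lemma cyl_nonempty (u : List Bool) : (cyl u).Nonempty :=
  ⟨fun i => u.getD i false, fun _ _ => rfl⟩

lemma exists_seg_subset {U : Set (ℕ → Bool)} (hU : IsOpen U) {x : ℕ → Bool} (hx : x ∈ U) :
    ∃ n, cyl (seg x n) ⊆ U := by
  rcases isOpen_pi_iff.1 hU x hx with ⟨I, f, hf, hsub⟩
  refine ⟨I.sup id + 1, fun y hy => hsub ?_⟩
  intro i hi
  have h1 : i < I.sup id + 1 := Nat.lt_succ_of_le (Finset.le_sup (f := id) hi)
  rw [mem_cyl_seg_iff.1 hy i h1]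
  exact (hf i hi).2

lemma exists_box_subset {D : Set ((ℕ → Bool) × (ℕ → Bool))} (hD : IsOpen D)
    {p : (ℕ → Bool) × (ℕ → Bool)} (hp : p ∈ D) :
    ∃ n, cyl (seg p.1 n) ×ˢ cyl (seg p.2 n) ⊆ D := by
  rcases isOpen_prod_iff.1 hD p.1 p.2 hp with ⟨U, V, hU, hV, hpU, hpV, hsub⟩
  rcases exists_seg_subset hU hpU with ⟨n1, h1⟩
  rcases exists_seg_subset hV hpV with ⟨n2, h2⟩
  refine ⟨max n1 n2, fun q hq => hsub ⟨?_, ?_⟩⟩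
  · exact h1 (mem_cyl_seg_iff.2 fun i hi => mem_cyl_seg_iff.1 hq.1 i (lt_of_lt_of_le hi (le_max_left _ _)))
  · exact h2 (mem_cyl_seg_iff.2 fun i hi => mem_cyl_seg_iff.1 hq.2 i (lt_of_lt_of_le hi (le_max_right _ _)))

/-! ### xor homeomorphisms -/

def xr (d x : ℕ → Bool) : ℕ → Bool := fun n => xor (x n) (d n)

lemma continuous_xr (d : ℕ → Bool) : Continuous (xr d) := by
  apply continuous_pi
  intro n
  exact (continuous_of_discreteTopology (f := fun b => xor b (d n))).comp (continuous_apply n)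

lemma xr_invol (d x : ℕ → Bool) : xr d (xr d x) = x := by
  funext n
  simp [xr, Bool.xor_assoc]

lemma E0_xr {d : ℕ → Bool} {N : ℕ} (hd : ∀ i ≥ N, d i = false) (x : ℕ → Bool) :
    E0 (xr d x) x :=
  ⟨N, fun n hn => by simp [xr, hd n hn]⟩

def xrHomeo (d e : ℕ → Bool) : ((ℕ → Bool) × (ℕ → Bool)) ≃ₜ ((ℕ → Bool) × (ℕ → Bool)) where
  toFun := fun p => (xr d p.1, xr e p.2)
  invFun := fun p => (xr d p.1, xr e p.2)
  left_inv := fun p => by simp [xr_invol]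
  right_inv := fun p => by simp [xr_invol]
  continuous_toFun := ((continuous_xr d).comp continuous_fst).prodMk
    ((continuous_xr e).comp continuous_snd)
  continuous_invFun := ((continuous_xr d).comp continuous_fst).prodMk
    ((continuous_xr e).comp continuous_snd)

lemma meager_diffs_of_eventuallyEq {Y : Type*} [TopologicalSpace Y] {s t : Set Y}
    (h : s =ᵇ t) : IsMeagre (s \ t) ∧ IsMeagre (t \ s) := by
  rw [Filter.eventuallyEq_set] at h
  constructor
  · rw [IsMeagre]
    refine Filter.mem_of_superset h ?_
    intro x hx
    simp only [Set.mem_setOf_eq] at hx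
    simp only [Set.mem_compl_iff, Set.mem_diff, not_and, not_not]
    exact fun h' => hx.mp h'
  · rw [IsMeagre]
    refine Filter.mem_of_superset h ?_
    intro x hx
    simp only [Set.mem_setOf_eq] at hx
    simp only [Set.mem_compl_iff, Set.mem_diff, not_and, not_not]
    exact fun h' => hx.mpr h'

/-! ### easy direction of Kuratowski–Ulam -/

lemma exists_section_residual {C : Set ((ℕ → Bool) × (ℕ → Bool))}
    (hC : C ∈ residual ((ℕ → Bool) × (ℕ → Bool))) :
    ∃ x : ℕ → Bool, {y | (x, y) ∈ C} ∈ residual (ℕ → Bool) := by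
  rw [mem_residual_iff] at hC
  obtain ⟨S, hSo, hSd, hSc, hSsub⟩ := hC
  rcases S.eq_empty_or_nonempty with rfl | hne
  · refine ⟨fun _ => false, Filter.mem_of_superset Filter.univ_mem ?_⟩
    intro y _
    exact hSsub (by simp)
  obtain ⟨D, hD⟩ := Set.Countable.exists_eq_range hSc hne
  have hDo : ∀ n, IsOpen (D n) := fun n => hSo _ (hD ▸ Set.mem_range_self n)
  have hDd : ∀ n, Dense (D n) := fun n => hSd _ (hD ▸ Set.mem_range_self n)
  set G : ℕ → List Bool → Set (ℕ → Bool) := fun n v => {x | ∃ y ∈ cyl v, (x, y) ∈ D n} with hG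
  have hGo : ∀ n v, IsOpen (G n v) := by
    intro n v
    have : G n v = ⋃ y ∈ cyl v, {x | (x, y) ∈ D n} := by
      ext x; simp [hG]
    rw [this]
    exact isOpen_biUnion fun y _ =>
      (hDo n).preimage (continuous_id.prodMk continuous_const)
  have hGd : ∀ n v, Dense (G n v) := by
    intro n v
    rw [dense_iff_inter_open]
    intro U hUo hUne
    obtain ⟨z, hz⟩ := hUne
    obtain ⟨m, hm⟩ := exists_seg_subset hUo hz
    have hbox : (cyl (seg z m) ×ˢ cyl v).Nonempty := (cyl_nonempty _).prod (cyl_nonempty _)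
    obtain ⟨q, hq1, hq2⟩ := (hDd n).inter_open_nonempty _
      ((isOpen_cyl _).prod (isOpen_cyl _)) hbox
    exact ⟨q.1, hm hq1.1, ⟨q.2, hq1.2, hq2⟩⟩
  have hT : (⋂ n, ⋂ v : List Bool, G n v) ∈ residual (ℕ → Bool) := by
    rw [countable_iInter_mem]
    intro n
    rw [countable_iInter_mem]
    intro v
    exact residual_of_dense_open (hGo n v) (hGd n v)
  obtain ⟨x, hx⟩ := (dense_of_mem_residual hT).nonempty
  refine ⟨x, ?_⟩
  have hsec : ∀ n, {y | (x, y) ∈ D n} ∈ residual (ℕ → Bool) := by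
    intro n
    apply residual_of_dense_open
    · exact (hDo n).preimage (continuous_const.prodMk continuous_id)
    · rw [dense_iff_inter_open]
      intro U hUo hUne
      obtain ⟨z, hz⟩ := hUne
      obtain ⟨m, hm⟩ := exists_seg_subset hUo hz
      have hxG : x ∈ G n (seg z m) := by
        have := Set.mem_iInter.1 (Set.mem_iInter.1 hx n) (seg z m)
        exact this
      obtain ⟨y, hy1, hy2⟩ := hxG
      exact ⟨y, hm hy1, hy2⟩
  have : (⋂ n, {y | (x, y) ∈ D n}) ∈ residual (ℕ → Bool) := by
    rw [countable_iInter_mem]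
    exact hsec
  refine Filter.mem_of_superset this ?_
  intro y hy
  apply hSsub
  rw [hD, Set.sInter_range]
  exact Set.mem_iInter.2 fun n => Set.mem_iInter.1 hy n

/-! ### the zero-one law: E is meager -/

lemma bool_xor_cancel' (a b : Bool) : xor a (xor a b) = b := by
  cases a <;> cases b <;> rfl

lemma isMeagre_E {E : Set ((ℕ → Bool) × (ℕ → Bool))}
    (hBM : BaireMeasurableSet E)
    (hEquiv : Equivalence (fun x y => (x, y) ∈ E))
    (hExt : ∀ x y, E0 x y → (x, y) ∈ E)
    (hNoComeager : ∀ x : ℕ → Bool, {y | (x, y) ∈ E} ∉ residual (ℕ → Bool)) :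
    IsMeagre E := by
  by_contra hnm
  obtain ⟨W, hWo, hWe⟩ := hBM.residualEq_isOpen
  obtain ⟨hEW, hWE⟩ := meager_diffs_of_eventuallyEq hWe
  have hWne : W.Nonempty := by
    rcases Set.eq_empty_or_nonempty W with rfl | hne
    · refine absurd ?_ hnm
      have : E \ (∅ : Set _) = E := by simp
      rw [← this]
      exact hEW
    · exact hne
  obtain ⟨p, hp⟩ := hWne
  obtain ⟨n, hbox0⟩ := exists_box_subset hWo hp
  -- invariance of E under finite xor
  have hEinv : ∀ (d e : ℕ → Bool) (N : ℕ), (∀ i ≥ N, d i = false) → (∀ i ≥ N, e i = false) →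
      ∀ x y : ℕ → Bool, (xr d x, xr e y) ∈ E → (x, y) ∈ E := by
    intro d e N hd he x y h
    have h1 : (x, xr d x) ∈ E := hExt _ _ (by
      obtain ⟨M, hM⟩ := E0_xr hd x
      exact ⟨M, fun m hm => (hM m hm).symm⟩)
    have h2 : (xr e y, y) ∈ E := hExt _ _ (E0_xr he y)
    exact hEquiv.trans h1 (hEquiv.trans h h2)
  -- all boxes of level n have meager complement of E
  have hbox : ∀ u v : List Bool, u.length = n → v.length = n →
      IsMeagre ((cyl u ×ˢ cyl v) \ E) := by
    intro u v hu hv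
    set d : ℕ → Bool := fun i => if i < n then xor (u.getD i false) (p.1 i) else false with hd
    set e : ℕ → Bool := fun i => if i < n then xor (v.getD i false) (p.2 i) else false with he
    have hdN : ∀ i ≥ n, d i = false := fun i hi => by simp [hd, Nat.not_lt_of_ge hi]
    have heN : ∀ i ≥ n, e i = false := fun i hi => by simp [he, Nat.not_lt_of_ge hi]
    have hmap : (cyl u ×ˢ cyl v) \ E ⊆ (xrHomeo d e) ⁻¹' ((cyl (seg p.1 n) ×ˢ cyl (seg p.2 n)) \ E) := by
      rintro ⟨x, y⟩ ⟨⟨hxu, hyv⟩, hxyE⟩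
      have hx1 : xr d x ∈ cyl (seg p.1 n) := by
        rw [mem_cyl_seg_iff]
        intro i hi
        have h4 := hxu i (by omega)
        simp only at h4
        simp only [xr, hd, if_pos hi]
        rw [h4]
        exact bool_xor_cancel' _ _
      have hy1 : xr e y ∈ cyl (seg p.2 n) := by
        rw [mem_cyl_seg_iff]
        intro i hi
        have h4 := hyv i (by omega)
        simp only at h4
        simp only [xr, he, if_pos hi]
        rw [h4]
        exact bool_xor_cancel' _ _
      refine ⟨⟨hx1, hy1⟩, fun hE' => hxyE (hEinv d e n hdN heN x y hE')⟩
    have hm0 : IsMeagre ((cyl (seg p.1 n) ×ˢ cyl (seg p.2 n)) \ E) := by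
      apply hWE.mono
      intro q hq
      exact ⟨hbox0 hq.1, hq.2⟩
    have hm1 : IsMeagre ((xrHomeo d e) ⁻¹' ((cyl (seg p.1 n) ×ˢ cyl (seg p.2 n)) \ E)) :=
      hm0.preimage_of_isOpenMap (xrHomeo d e).continuous (xrHomeo d e).isOpenMap
    exact hm1.mono hmap
  -- cover the complement of E by countably many meager sets
  have hcompl : IsMeagre Eᶜ := by
    set Sq : List Bool × List Bool → Set ((ℕ → Bool) × (ℕ → Bool)) := fun q =>
      if q.1.length = n ∧ q.2.length = n then (cyl q.1 ×ˢ cyl q.2) \ E else ∅ with hSq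
    have hsub : Eᶜ ⊆ ⋃ q, Sq q := by
      rintro ⟨x, y⟩ hxy
      refine Set.mem_iUnion.2 ⟨(seg x n, seg y n), ?_⟩
      rw [hSq]
      simp only [length_seg, and_self, if_pos]
      exact ⟨⟨mem_cyl_seg x n, mem_cyl_seg y n⟩, hxy⟩
    have hms : ∀ q, IsMeagre (Sq q) := by
      intro q
      by_cases h : q.1.length = n ∧ q.2.length = n
      · have : Sq q = cyl q.1 ×ˢ cyl q.2 \ E := by simp only [hSq, if_pos h]
        rw [this]
        exact hbox q.1 q.2 h.1 h.2
      · have : Sq q = ∅ := by simp only [hSq, if_neg h]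
        rw [this, IsMeagre, Set.compl_empty]
        exact Filter.univ_mem
    refine (isMeagre_iUnion' Sq hms).mono hsub
  have hres : E ∈ residual _ := by
    have := hcompl
    rw [IsMeagre, compl_compl] at this
    exact this
  obtain ⟨x, hx⟩ := exists_section_residual hres
  exact hNoComeager x hx


lemma prefix_append_left {p a b : List Bool} (h : a <+: b) : p ++ a <+: p ++ b := by
  rcases h with ⟨t, rfl⟩
  exact ⟨t, by rw [List.append_assoc]⟩

lemma box_ext {D : Set ((ℕ → Bool) × (ℕ → Bool))} (hDo : IsOpen D) (hDd : Dense D)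
    (u v : List Bool) :
    ∃ w z : List Bool, u <+: w ∧ v <+: z ∧
      ∀ x y : ℕ → Bool, x ∈ cyl w → y ∈ cyl z → (x, y) ∈ D := by
  obtain ⟨q, hq1, hq2⟩ := hDd.inter_open_nonempty _ ((isOpen_cyl u).prod (isOpen_cyl v))
    ((cyl_nonempty u).prod (cyl_nonempty v))
  obtain ⟨n, hn⟩ := exists_box_subset hDo hq2
  refine ⟨seg q.1 (max n u.length), seg q.2 (max n v.length),
    prefix_seg hq1.1 (le_max_right _ _), prefix_seg hq1.2 (le_max_right _ _), ?_⟩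
  intro x y hx hy
  apply hn
  constructor
  · exact mem_cyl_seg_iff.2 fun i hi =>
      mem_cyl_seg_iff.1 hx i (lt_of_lt_of_le hi (le_max_left _ _))
  · exact mem_cyl_seg_iff.2 fun i hi =>
      mem_cyl_seg_iff.1 hy i (lt_of_lt_of_le hi (le_max_left _ _))

lemma stage_req {D : Set ((ℕ → Bool) × (ℕ → Bool))} (hDo : IsOpen D) (hDd : Dense D)
    (Rs : List (List Bool × List Bool × Bool × Bool)) (hne : ∀ r ∈ Rs, r.2.2.1 ≠ r.2.2.2)
    (t : Bool → List Bool) :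
    ∃ t' : Bool → List Bool, (∀ b, t b <+: t' b) ∧
      ∀ r ∈ Rs, ∀ x y : ℕ → Bool,
        x ∈ cyl (r.1 ++ t' r.2.2.1) → y ∈ cyl (r.2.1 ++ t' r.2.2.2) → (x, y) ∈ D := by
  induction Rs generalizing t with
  | nil => exact ⟨t, fun _ => List.prefix_refl _, by simp⟩
  | cons r Rs ih =>
    obtain ⟨t1, ht1, hcond⟩ := ih (fun r' h' => hne r' (List.mem_cons_of_mem _ h')) t
    obtain ⟨w, z, hw, hz, hbox⟩ := box_ext hDo hDd (r.1 ++ t1 r.2.2.1) (r.2.1 ++ t1 r.2.2.2)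
    have hbc : r.2.2.1 ≠ r.2.2.2 := hne r List.mem_cons_self
    obtain ⟨tw, hwEq⟩ := hw
    obtain ⟨tz, hzEq⟩ := hz
    set t2 : Bool → List Bool := fun d =>
      if d = r.2.2.1 then w.drop r.1.length else z.drop r.2.1.length with ht2
    have ht2b : t2 r.2.2.1 = w.drop r.1.length := if_pos rfl
    have ht2c : t2 r.2.2.2 = z.drop r.2.1.length := if_neg (fun h => hbc h.symm)
    have hwd : w.drop r.1.length = t1 r.2.2.1 ++ tw := by
      rw [← hwEq, List.append_assoc, List.drop_left]
    have hzd : z.drop r.2.1.length = t1 r.2.2.2 ++ tz := by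
      rw [← hzEq, List.append_assoc, List.drop_left]
    have h1 : ∀ d, t1 d <+: t2 d := by
      intro d
      by_cases hd : d = r.2.2.1
      · rw [hd, ht2b, hwd]; exact ⟨tw, rfl⟩
      · have hd2 : d = r.2.2.2 := by
          revert hd hbc
          cases d <;> cases r.2.2.1 <;> cases r.2.2.2 <;> simp
        rw [hd2, ht2c, hzd]; exact ⟨tz, rfl⟩
    refine ⟨t2, fun b => (ht1 b).trans (h1 b), ?_⟩
    intro r' hr' x y hx hy
    rcases List.mem_cons.1 hr' with rfl | hr'
    · apply hbox x y
      · have : r'.1 ++ t2 r'.2.2.1 = w := by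
          rw [ht2b, hwd, ← List.append_assoc, hwEq]
        rwa [this] at hx
      · have : r'.2.1 ++ t2 r'.2.2.2 = z := by
          rw [ht2c, hzd, ← List.append_assoc, hzEq]
        rwa [this] at hy
    · exact hcond r' hr' x y (cyl_anti (prefix_append_left (h1 _)) hx)
        (cyl_anti (prefix_append_left (h1 _)) hy)

lemma stage_final {D : Set ((ℕ → Bool) × (ℕ → Bool))} (hDo : IsOpen D) (hDd : Dense D)
    (Rs : List (List Bool × List Bool × Bool × Bool)) (hne : ∀ r ∈ Rs, r.2.2.1 ≠ r.2.2.2) :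
    ∃ blk : Bool → List Bool, (blk true).length = (blk false).length ∧
      1 ≤ (blk true).length ∧
      ∀ r ∈ Rs, ∀ x y : ℕ → Bool,
        x ∈ cyl (r.1 ++ blk r.2.2.1) → y ∈ cyl (r.2.1 ++ blk r.2.2.2) → (x, y) ∈ D := by
  obtain ⟨t', _, hcond⟩ := stage_req hDo hDd Rs hne (fun _ => [])
  set L := max (t' true).length (t' false).length with hL
  set blk : Bool → List Bool :=
    fun b => t' b ++ List.replicate (L + 1 - (t' b).length) false with hblk
  have hlen : ∀ b, (blk b).length = L + 1 := by
    intro b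
    have : (t' b).length ≤ L := by cases b <;> simp [hL, le_max_left, le_max_right]
    simp [hblk]
    omega
  have hpre : ∀ b, t' b <+: blk b := fun b => ⟨_, rfl⟩
  refine ⟨blk, by rw [hlen, hlen], by rw [hlen]; omega, ?_⟩
  intro r hr x y hx hy
  exact hcond r hr x y (cyl_anti (prefix_append_left (hpre _)) hx)
    (cyl_anti (prefix_append_left (hpre _)) hy)

/-- All strings obtainable by choosing one value of each block. -/
def strsL : List (Bool → List Bool) → List (List Bool)
  | [] => [[]]
  | blk :: rest => ((strsL rest).map fun s => blk true ++ s) ++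
      ((strsL rest).map fun s => blk false ++ s)

/-- The string determined by `x` through a list of blocks. -/
def catFor : List (Bool → List Bool) → (ℕ → Bool) → List Bool
  | [], _ => []
  | blk :: rest, x => blk (x 0) ++ catFor rest (fun i => x (i + 1))

lemma catFor_mem : ∀ (h : List (Bool → List Bool)) (x : ℕ → Bool), catFor h x ∈ strsL h := by
  intro h
  induction h with
  | nil => intro x; simp [catFor, strsL]
  | cons blk rest ih =>
    intro x
    rw [catFor, strsL, List.mem_append]
    cases hx : x 0
    · exact Or.inr (List.mem_map.2 ⟨catFor rest fun i => x (i+1), ih _, rfl⟩)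
    · exact Or.inl (List.mem_map.2 ⟨catFor rest fun i => x (i+1), ih _, rfl⟩)

lemma catFor_append : ∀ (h : List (Bool → List Bool)) (blk : Bool → List Bool) (x : ℕ → Bool),
    catFor (h ++ [blk]) x = catFor h x ++ blk (x h.length) := by
  intro h
  induction h with
  | nil => intro blk x; simp [catFor]
  | cons b h ih =>
    intro blk x
    rw [List.cons_append, catFor, catFor, ih, ← List.append_assoc]
    rfl

/-- The fusion construction. -/
lemma exists_fusion {Dn : ℕ → Set ((ℕ → Bool) × (ℕ → Bool))}
    (hDo : ∀ n, IsOpen (Dn n)) (hDd : ∀ n, Dense (Dn n))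
    (hDmono : ∀ j m, j ≤ m → Dn m ⊆ Dn j) :
    ∃ f : (ℕ → Bool) → (ℕ → Bool), Measurable f ∧
      (∀ x y, E0 x y → E0 (f x) (f y)) ∧
      (∀ x y, ¬E0 x y → ∀ j, (f x, f y) ∈ Dn j) := by
  classical
  -- stage existence
  have hexists : ∀ (h : List (Bool → List Bool)) (n : ℕ), ∃ blk : Bool → List Bool,
      (blk true).length = (blk false).length ∧ 1 ≤ (blk true).length ∧
      ∀ p ∈ strsL h, ∀ q ∈ strsL h, ∀ b c : Bool, b ≠ c →
        ∀ x y : ℕ → Bool, x ∈ cyl (p ++ blk b) → y ∈ cyl (q ++ blk c) → (x, y) ∈ Dn n := by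
    intro h n
    set Rs : List (List Bool × List Bool × Bool × Bool) :=
      (strsL h).flatMap fun p => (strsL h).flatMap fun q =>
        [(p, q, true, false), (p, q, false, true)] with hRs
    have hne : ∀ r ∈ Rs, r.2.2.1 ≠ r.2.2.2 := by
      intro r hr
      simp only [hRs, List.mem_flatMap] at hr
      obtain ⟨p, _, q, _, hr⟩ := hr
      simp only [List.mem_cons, List.not_mem_nil, or_false] at hr
      rcases hr with rfl | rfl <;> simp
    obtain ⟨blk, h1, h2, h3⟩ := stage_final (hDo n) (hDd n) Rs hne
    refine ⟨blk, h1, h2, ?_⟩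
    intro p hp q hq b c hbc x y hx hy
    have hmem : (p, q, b, c) ∈ Rs := by
      simp only [hRs, List.mem_flatMap]
      refine ⟨p, hp, q, hq, ?_⟩
      cases b <;> cases c <;> simp_all
    exact h3 (p, q, b, c) hmem x y hx hy
  -- history and blocks
  set hist : ℕ → List (Bool → List Bool) :=
    fun n => Nat.rec [] (fun m h => h ++ [Classical.choose (hexists h m)]) n with hhist
  set Blk : ℕ → Bool → List Bool := fun n => Classical.choose (hexists (hist n) n) with hBlkdef
  have hist_succ : ∀ n, hist (n + 1) = hist n ++ [Blk n] := fun n => rfl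
  have hBlk : ∀ n, ((Blk n true).length = (Blk n false).length ∧ 1 ≤ (Blk n true).length ∧
      ∀ p ∈ strsL (hist n), ∀ q ∈ strsL (hist n), ∀ b c : Bool, b ≠ c →
        ∀ x y : ℕ → Bool, x ∈ cyl (p ++ Blk n b) → y ∈ cyl (q ++ Blk n c) → (x, y) ∈ Dn n) :=
    fun n => Classical.choose_spec (hexists (hist n) n)
  have hist_len : ∀ n, (hist n).length = n := by
    intro n
    induction n with
    | zero => rfl
    | succ n ih => rw [hist_succ, List.length_append, ih]; rfl
  have hBlk_len : ∀ n b, (Blk n b).length = (Blk n true).length := by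
    intro n b; cases b
    · exact ((hBlk n).1).symm
    · rfl
  set len : ℕ → ℕ := fun n => Nat.rec 0 (fun m l => l + (Blk m true).length) n with hlen
  have len_succ : ∀ n, len (n + 1) = len n + (Blk n true).length := fun _ => rfl
  have len_mono : Monotone len :=
    monotone_nat_of_le_succ (fun n => by rw [len_succ]; omega)
  have len_lt : ∀ n, len n < len (n + 1) := by
    intro n
    have := (hBlk n).2.1
    rw [len_succ]; omega
  have len_ge : ∀ n, n ≤ len n := fun n =>
    Nat.rec (Nat.zero_le _) (fun n ih => by show n + 1 ≤ len (n + 1); have h2 := len_lt n; omega) n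
  -- index of the block containing position k
  have hex : ∀ k, ∃ i, k < len (i + 1) := fun k => ⟨k, by have := len_ge (k+1); omega⟩
  set idx : ℕ → ℕ := fun k => Nat.find (hex k) with hidx
  have idx_spec : ∀ k, k < len (idx k + 1) := fun k => Nat.find_spec (hex k)
  have idx_le : ∀ k, len (idx k) ≤ k := by
    intro k
    rcases Nat.eq_zero_or_pos (idx k) with h | h
    · rw [h]; exact Nat.zero_le k
    · by_contra hc
      push_neg at hc
      have hj : idx k - 1 < idx k := by omega
      have h2 := Nat.find_min (hex k) hj
      have heq : idx k - 1 + 1 = idx k := by omega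
      rw [heq] at h2
      exact h2 hc
  have idx_eq : ∀ k n, len n ≤ k → k < len (n + 1) → idx k = n := by
    intro k n h1 h2
    have hle : idx k ≤ n := Nat.find_min' (hex k) h2
    rcases Nat.lt_or_ge (idx k) n with h | h
    · exfalso
      have h3 : len (idx k + 1) ≤ len n := len_mono (Nat.succ_le_of_lt h)
      have h4 := idx_spec k
      omega
    · omega
  -- the reduction
  set f : (ℕ → Bool) → (ℕ → Bool) :=
    fun x k => (Blk (idx k) (x (idx k))).getD (k - len (idx k)) false with hf
  have hf_meas : Measurable f := by
    apply measurable_pi_lambda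
    intro k
    exact (measurable_of_countable
      (fun b : Bool => (Blk (idx k) b).getD (k - len (idx k)) false)).comp
      (measurable_pi_apply (idx k))
  -- strings
  set sFor : (ℕ → Bool) → ℕ → List Bool := fun x n => catFor (hist n) x with hsFor
  have sFor_succ : ∀ x n, sFor x (n + 1) = sFor x n ++ Blk n (x n) := by
    intro x n
    rw [hsFor]
    simp only
    rw [hist_succ, catFor_append, hist_len]
  have sFor_len : ∀ x n, (sFor x n).length = len n := by
    intro x n
    induction n with
    | zero => rfl
    | succ n ih => rw [sFor_succ, List.length_append, ih, hBlk_len, len_succ]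
  have sFor_mem : ∀ x n, sFor x n ∈ strsL (hist n) := fun x n => catFor_mem _ _
  -- prefix property
  have hfpre : ∀ x n i, i < len n → f x i = (sFor x n).getD i false := by
    intro x n
    induction n with
    | zero =>
      intro i hi
      have h0 : len 0 = 0 := rfl
      omega
    | succ n ih =>
      intro i hi
      rw [sFor_succ]
      rcases Nat.lt_or_ge i (len n) with h | h
      · rw [List.getD_append _ _ _ _ (by rw [sFor_len]; exact h)]
        exact ih i h
      · rw [List.getD_append_right _ _ _ _ (by rw [sFor_len]; exact h), sFor_len]
        have hidxi : idx i = n := idx_eq i n h hi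
        rw [hf]
        simp only
        rw [hidxi]
  -- E0 preservation
  have hE0 : ∀ x y, E0 x y → E0 (f x) (f y) := by
    rintro x y ⟨N, hN⟩
    refine ⟨len N, fun k hk => ?_⟩
    have hge : N ≤ idx k := by
      by_contra hc
      push_neg at hc
      have h3 : len (idx k + 1) ≤ len N := len_mono (Nat.succ_le_of_lt hc)
      have h4 := idx_spec k
      omega
    rw [hf]
    simp only
    rw [hN (idx k) hge]
  -- avoidance
  have hAv : ∀ x y, ¬E0 x y → ∀ j, (f x, f y) ∈ Dn j := by
    intro x y hxy j
    have hall : ∀ N, ∃ m, N ≤ m ∧ x m ≠ y m := by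
      intro N
      by_contra hc
      push_neg at hc
      exact hxy ⟨N, fun n hn => hc n hn⟩
    obtain ⟨m, hjm, hm⟩ := hall j
    have hx : f x ∈ cyl (sFor x m ++ Blk m (x m)) := by
      rw [← sFor_succ x m]
      intro i hi2
      exact hfpre x (m + 1) i (lt_of_lt_of_eq hi2 (sFor_len x (m + 1)))
    have hy : f y ∈ cyl (sFor y m ++ Blk m (y m)) := by
      rw [← sFor_succ y m]
      intro i hi2
      exact hfpre y (m + 1) i (lt_of_lt_of_eq hi2 (sFor_len y (m + 1)))
    have := (hBlk m).2.2 (sFor x m) (sFor_mem x m) (sFor y m) (sFor_mem y m)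
      (x m) (y m) hm (f x) (f y) hx hy
    exact hDmono j m hjm this
  exact ⟨f, hf_meas, hE0, hAv⟩

end E0Red


/-- If `E` is an analytic equivalence relation on `2^ℕ` extending `E₀` and with no
comeager class, then `E₀` is Borel reducible to `E`. -/
theorem E0_reducible_of_no_comeager_class (E : Set ((ℕ → Bool) × (ℕ → Bool)))
    (hAnal : AnalyticSet E)
    (hEquiv : Equivalence (fun x y => (x, y) ∈ E))
    (hExt : ∀ x y, E0 x y → (x, y) ∈ E)
    (hNoComeager : ∀ x : ℕ → Bool, {y | (x, y) ∈ E} ∉ residual (ℕ → Bool)) :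
    ∃ f : (ℕ → Bool) → (ℕ → Bool), Measurable f ∧
      ∀ x y, E0 x y ↔ (f x, f y) ∈ E := by
  classical
  have hBM : BaireMeasurableSet E := E0Red.AnalyticSet.baireMeasurableSet' hAnal
  have hM : IsMeagre E := E0Red.isMeagre_E hBM hEquiv hExt hNoComeager
  have hMres : Eᶜ ∈ residual _ := hM
  rw [mem_residual_iff] at hMres
  obtain ⟨S, hSo, hSd, hSc, hSsub⟩ := hMres
  obtain ⟨D, hD⟩ := Set.Countable.exists_eq_range (hSc.insert Set.univ)
    (Set.insert_nonempty _ _)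
  have hDmem : ∀ n, D n = Set.univ ∨ D n ∈ S := by
    intro n
    have : D n ∈ insert Set.univ S := hD ▸ Set.mem_range_self n
    simpa using this
  have hDo : ∀ n, IsOpen (D n) := by
    intro n
    rcases hDmem n with h | h
    · rw [h]; exact isOpen_univ
    · exact hSo _ h
  have hDd : ∀ n, Dense (D n) := by
    intro n
    rcases hDmem n with h | h
    · rw [h]; exact dense_univ
    · exact hSd _ h
  set Dn : ℕ → Set ((ℕ → Bool) × (ℕ → Bool)) :=
    fun n => Nat.rec (D 0) (fun m t => t ∩ D (m + 1)) n with hDn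
  have hDn_succ : ∀ n, Dn (n + 1) = Dn n ∩ D (n + 1) := fun _ => rfl
  have hDno : ∀ n, IsOpen (Dn n) := by
    intro n
    induction n with
    | zero => exact hDo 0
    | succ n ih => rw [hDn_succ]; exact ih.inter (hDo (n + 1))
  have hDnd : ∀ n, Dense (Dn n) := by
    intro n
    induction n with
    | zero => exact hDd 0
    | succ n ih => rw [hDn_succ]; exact ih.inter_of_isOpen_left (hDd (n + 1)) (hDno n)
  have hAnti : Antitone Dn := antitone_nat_of_succ_le (fun n => by
    rw [hDn_succ]; exact Set.inter_subset_left)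
  have hDnsub : ∀ n, Dn n ⊆ D n := by
    intro n
    cases n with
    | zero => exact fun _ h => h
    | succ n => rw [hDn_succ]; exact Set.inter_subset_right
  obtain ⟨f, hf, hE0p, hAvoid⟩ := E0Red.exists_fusion hDno hDnd (fun j m h => hAnti h)
  refine ⟨f, hf, fun x y => ⟨fun h => hExt _ _ (hE0p x y h), fun hFE => ?_⟩⟩
  by_contra hne
  have hmem : (f x, f y) ∈ ⋂₀ S := by
    intro t ht
    have : t ∈ Set.range D := by rw [← hD]; exact Set.mem_insert_of_mem _ ht
    obtain ⟨n, rfl⟩ := this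
    exact hDnsub n (hAvoid x y hne n)
  exact hSsub hmem hFE
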